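/- Consistent Neumann boundary condition for the updated pressure: Under the hypotheses of the consistency theorem for the shear-rate projection splitting (prediction equation for ũ with viscosity field b and old pressure p; velocity correction u = ũ − (2Δt/(3ρ))∇φ; correction equation ∇ψ = ∇·(2a D(u)) − ∇·(2b D(ũ)); updated pressure q = p + φ + ψ), for every point x ∈ Ω and every vector n ∈ ℝ^d, one has ⟨∇q(x), n⟩ = ⟨f(x) − ρ(3u − 4uⁿ + uⁿ⁻¹)(x)/(2Δt) − ρ((ũ·∇)ũ)(x) + (∇·(2a D(u)))(x), n⟩. -/

import Mathlib

/-- Partial derivative `∂_j g` of a scalar field on `ℝ^d`. -/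
noncomputable def pdiff {d : ℕ} (j : Fin d) (g : (Fin d → ℝ) → ℝ) (x : Fin d → ℝ) : ℝ :=
  fderiv ℝ g x (Pi.single j 1)

/-- Shear-rate tensor `D(v)_{ij} = (∂_j v_i + ∂_i v_j)/2` of a vector field. -/
noncomputable def shearD {d : ℕ} (v : (Fin d → ℝ) → (Fin d → ℝ)) (i j : Fin d)
    (x : Fin d → ℝ) : ℝ :=
  (pdiff j (fun y => v y i) x + pdiff i (fun y => v y j) x) / 2

/-- Consistent Neumann boundary condition for the updated pressure `q = p + φ + ψ`
of the shear-rate projection scheme: at every point of `Ω` and for every vector `n`,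
`⟨∇q, n⟩ = ⟨f - ρ D_t u - ρ (ũ·∇)ũ + ∇·(2a D(u)), n⟩`. -/
theorem shear_rate_projection_neumann
    (d : ℕ) (hd : 1 ≤ d) (Ω : Set (Fin d → ℝ)) (hΩ : IsOpen Ω)
    (ρ dt : ℝ) (hρ : 0 < ρ) (hdt : 0 < dt)
    (ut u un un1 : (Fin d → ℝ) → (Fin d → ℝ))
    (a b : (Fin d → ℝ) → ℝ)
    (p φ ψ : (Fin d → ℝ) → ℝ)
    (f : (Fin d → ℝ) → (Fin d → ℝ))
    (hut : ContDiff ℝ 2 ut) (hu : ContDiff ℝ 2 u)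
    (hun : ContDiff ℝ 2 un) (hun1 : ContDiff ℝ 2 un1)
    (ha : ContDiff ℝ 1 a) (hb : ContDiff ℝ 1 b)
    (hp : ContDiff ℝ 1 p) (hφ : ContDiff ℝ 1 φ) (hψ : ContDiff ℝ 1 ψ)
    -- (i) prediction equation
    (hpred : ∀ x ∈ Ω, ∀ i,
      ρ * (3 * ut x i - 4 * un x i + un1 x i) / (2 * dt)
        + ρ * (∑ j, ut x j * pdiff j (fun y => ut y i) x)
        - (∑ j, pdiff j (fun y => 2 * b y * shearD ut i j y) x)
        + pdiff i p x = f x i)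
    -- (ii) velocity correction
    (hcorr : ∀ x ∈ Ω, ∀ i,
      u x i = ut x i - (2 * dt / (3 * ρ)) * pdiff i φ x)
    -- (iii) shear-rate correction equation
    (hpsi : ∀ x ∈ Ω, ∀ i,
      pdiff i ψ x = (∑ j, pdiff j (fun y => 2 * a y * shearD u i j y) x)
        - (∑ j, pdiff j (fun y => 2 * b y * shearD ut i j y) x)) :
    ∀ x ∈ Ω, ∀ n : Fin d → ℝ,
      (∑ i, pdiff i (fun y => p y + φ y + ψ y) x * n i)
        = ∑ i, (f x i
            - ρ * (3 * u x i - 4 * un x i + un1 x i) / (2 * dt)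
            - ρ * (∑ j, ut x j * pdiff j (fun y => ut y i) x)
            + (∑ j, pdiff j (fun y => 2 * a y * shearD u i j y) x)) * n i := by
  intro x hx n
  apply Finset.sum_congr rfl
  intro i _
  congr 1
  have hdp : DifferentiableAt ℝ p x := (hp.differentiable one_ne_zero).differentiableAt
  have hdφ : DifferentiableAt ℝ φ x := (hφ.differentiable one_ne_zero).differentiableAt
  have hdψ : DifferentiableAt ℝ ψ x := (hψ.differentiable one_ne_zero).differentiableAt
  have hadd : pdiff i (fun y => p y + φ y + ψ y) x
      = pdiff i p x + pdiff i φ x + pdiff i ψ x := by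
    unfold pdiff
    rw [fderiv_fun_add (f := fun y => p y + φ y) (hdp.add hdφ) hdψ, fderiv_fun_add hdp hdφ]
    simp
  rw [hadd, hcorr x hx i, hpsi x hx i]
  have h1 := hpred x hx i
  have hρ' : ρ ≠ 0 := ne_of_gt hρ
  have hdt' : dt ≠ 0 := ne_of_gt hdt
  field_simp at h1 ⊢
  nlinarith [h1]
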